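/- Let n ≥ 2 and let α ∈ ℝ with α ∉ {−(n−2), −(n−3), …, −1, 0, 1} (i.e., α is not an integer in the interval [−(n−2), 1]). Then the hyperplane h_α = {x ∈ ℝ^n : α x_1 + ∑_{i=2}^n x_i = 1} has weight w(h_α) = 1 − 1/n. -/

import Mathlib

open scoped Classical in
/-- The Clifton–Huang weight of the hyperplane `{x : ∑ i, c i * x i = 1}`:
the sum over nonempty subsets `S ⊆ [n]` with `∑_{i ∈ S} c i = 1` of
`1 / (|S| * binom(n, |S|))`. -/
noncomputable def hyperplaneWeight {n : ℕ} (c : Fin n → ℝ) : ℝ :=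
  ∑ S : Finset (Fin n),
    if S.Nonempty ∧ ∑ i ∈ S, c i = 1 then
      1 / (S.card * (n.choose S.card)) else 0

theorem weight_alpha_hyperplane (n : ℕ) (hn : 2 ≤ n) (α : ℝ)
    (hα : ∀ m : ℤ, -((n : ℤ) - 2) ≤ m → m ≤ 1 → α ≠ (m : ℝ)) :
    hyperplaneWeight (fun i : Fin n => if (i : ℕ) = 0 then α else 1) = 1 - 1 / n := by
  classical
  haveI : NeZero n := ⟨by omega⟩
  unfold hyperplaneWeight
  have key : ∀ S : Finset (Fin n),
      (if S.Nonempty ∧ ∑ i ∈ S, (if ((i : Fin n) : ℕ) = 0 then α else 1) = 1 then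
        1 / ((S.card : ℝ) * ((n.choose S.card : ℕ) : ℝ)) else 0)
      = if S.card = 1 ∧ (0 : Fin n) ∉ S then 1 / (n : ℝ) else 0 := by
    intro S
    have hsum : ∑ i ∈ S, (if ((i : Fin n) : ℕ) = 0 then α else 1)
        = (if (0 : Fin n) ∈ S then α - 1 else 0) + S.card := by
      have : ∀ i ∈ S, (if ((i : Fin n) : ℕ) = 0 then α else 1)
          = (if i = (0 : Fin n) then α - 1 else 0) + 1 := by
        intro i _
        by_cases h : i = 0
        · simp [h]
        · have : (i : ℕ) ≠ 0 := fun hv => h (Fin.ext (by simp [hv]))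
          simp [h, this]
      rw [Finset.sum_congr rfl this, Finset.sum_add_distrib,
        Finset.sum_ite_eq' S (0 : Fin n) (fun _ => α - 1), Finset.sum_const,
        nsmul_eq_mul, mul_one]
    by_cases h0 : (0 : Fin n) ∈ S
    · -- 0 ∈ S : condition fails since α is excluded
      have hne : ¬ (S.Nonempty ∧ ∑ i ∈ S, (if ((i : Fin n) : ℕ) = 0 then α else 1) = 1) := by
        rintro ⟨hS, hsum1⟩
        rw [hsum, if_pos h0] at hsum1
        have hcard1 : 1 ≤ S.card := Finset.card_pos.mpr hS
        have hcardn : S.card ≤ n := by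
          simpa using Finset.card_le_card (Finset.subset_univ S)
        have hαval : α = ((2 - (S.card : ℤ) : ℤ) : ℝ) := by
          push_cast
          linarith
        exact hα (2 - (S.card : ℤ)) (by omega) (by omega) hαval
      rw [if_neg hne, if_neg (by tauto)]
    · -- 0 ∉ S : condition means card = 1
      by_cases hc : S.card = 1
      · have hS : S.Nonempty := Finset.card_pos.mp (by omega)
        have hsum1 : ∑ i ∈ S, (if ((i : Fin n) : ℕ) = 0 then α else 1) = 1 := by
          rw [hsum, if_neg h0, hc]; simp
        rw [if_pos ⟨hS, hsum1⟩, if_pos ⟨hc, h0⟩, hc]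
        simp [Nat.choose_one_right]
      · have hne : ¬ (S.Nonempty ∧ ∑ i ∈ S, (if ((i : Fin n) : ℕ) = 0 then α else 1) = 1) := by
          rintro ⟨hS, hsum1⟩
          rw [hsum, if_neg h0, zero_add] at hsum1
          exact hc (by exact_mod_cast hsum1)
        rw [if_neg hne, if_neg (by tauto)]
  have step : (∑ S : Finset (Fin n),
      if S.Nonempty ∧ ∑ i ∈ S, (fun i : Fin n => if (i : ℕ) = 0 then α else 1) i = 1 then
        1 / ((S.card : ℝ) * ((n.choose S.card : ℕ) : ℝ)) else 0)
      = ∑ S : Finset (Fin n), if S.card = 1 ∧ (0 : Fin n) ∉ S then 1 / (n : ℝ) else 0 :=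
    Finset.sum_congr rfl fun S _ => key S
  rw [step]
  rw [← Finset.sum_filter, Finset.sum_const, nsmul_eq_mul]
  have hset : Finset.univ.filter (fun S : Finset (Fin n) => S.card = 1 ∧ (0 : Fin n) ∉ S)
      = (Finset.univ.erase (0 : Fin n)).image (fun i => ({i} : Finset (Fin n))) := by
    ext S
    simp only [Finset.mem_filter, Finset.mem_univ, true_and, Finset.mem_image,
      Finset.mem_erase]
    constructor
    · rintro ⟨hc, h0⟩
      obtain ⟨a, rfl⟩ := Finset.card_eq_one.mp hc
      exact ⟨a, ⟨fun h => h0 (by simp [h]), by simp⟩, rfl⟩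
    · rintro ⟨a, ⟨ha, -⟩, rfl⟩
      exact ⟨Finset.card_singleton a, fun h => ha (Finset.mem_singleton.mp h).symm⟩
  rw [hset, Finset.card_image_of_injective _ Finset.singleton_injective,
    Finset.card_erase_of_mem (Finset.mem_univ _), Finset.card_univ, Fintype.card_fin]
  have hn0 : (n : ℝ) ≠ 0 := by positivity
  rw [Nat.cast_sub (by omega)]
  field_simp
  norm_num
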